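/- arXiv:2311.10026 — 4 statements merged into one kernel-verified Lean document; each statement's English description precedes it below -/
import Mathlib

section
/- Suppose r_in > σ·(1-γ) - L_in. Then high-return state-space sequences exist: for every state-space sequence ξ with ξ k ∈ G for all k ∈ ℕ and for every policy π, J^π(ξ) ≥ (r_in + L_in)/(1-γ) > σ. -/
theorem stmt7 {X U : Type*} [Nonempty U]
    (G : Set X) (γ : ℝ) (hg0 : 0 ≤ γ) (hg1 : γ < 1)
    (rb : X → X → U → ℝ) (Lout Uout Lin Uin : ℝ)
    (hUout : ∀ (x' x : X) (u : U), x' ∉ G → rb x' x u ≤ Uout)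
    (hLout : ∀ (x' x : X) (u : U), x' ∉ G → Lout ≤ rb x' x u)
    (hUin : ∀ (x' x : X) (u : U), x' ∈ G → rb x' x u ≤ Uin)
    (hLin : ∀ (x' x : X) (u : U), x' ∈ G → Lin ≤ rb x' x u)
    (rin rexit : ℝ) (rc : X → X → ℝ)
    (hrc_in : ∀ (x' x : X), x' ∈ G → rc x' x = rin)
    (hrc_exit : ∀ (x' x : X), x' ∉ G → x ∈ G → rc x' x = rexit)
    (hrc_zero : ∀ (x' x : X), x' ∉ G → x ∉ G → rc x' x = 0)
    (r : X → X → U → ℝ)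
    (hr : ∀ (x' x : X) (u : U), r x' x u = rb x' x u + rc x' x)
    (hG : G.Nonempty) (σ : ℝ)
    (hrin : rin > σ * (1 - γ) - Lin)
    (ξ : ℕ → X) (hall : ∀ k : ℕ, ξ k ∈ G) (π : X → U) :
    (∑' k : ℕ, γ ^ k * r (ξ (k + 1)) (ξ k) (π (ξ k))) ≥ (rin + Lin) / (1 - γ) ∧ (rin + Lin) / (1 - γ) > σ := by
  have hγ : |γ| < 1 := by rw [abs_of_nonneg hg0]; exact hg1
  have h1γ : (0:ℝ) < 1 - γ := by linarith
  set f : ℕ → ℝ := fun k => γ ^ k * r (ξ (k + 1)) (ξ k) (π (ξ k)) with hf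
  set M : ℝ := max |Lin + rin| |Uin + rin| with hM
  have hbound : ∀ k, Lin + rin ≤ r (ξ (k + 1)) (ξ k) (π (ξ k)) ∧
      r (ξ (k + 1)) (ξ k) (π (ξ k)) ≤ Uin + rin := by
    intro k
    rw [hr, hrc_in _ _ (hall (k+1))]
    exact ⟨by have := hLin (ξ (k+1)) (ξ k) (π (ξ k)) (hall (k+1)); linarith,
      by have := hUin (ξ (k+1)) (ξ k) (π (ξ k)) (hall (k+1)); linarith⟩
  have hsum : Summable f := by
    apply Summable.of_norm_bounded (g := fun k => M * γ ^ k)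
    · exact (summable_geometric_of_lt_one hg0 hg1).mul_left M
    · intro k
      have hb := hbound k
      rw [hf]
      simp only [norm_mul, norm_pow, Real.norm_eq_abs, abs_of_nonneg hg0]
      rw [mul_comm]
      apply mul_le_mul_of_nonneg_right _ (pow_nonneg hg0 k)
      rw [abs_le]
      constructor
      · have : -|Lin + rin| ≤ Lin + rin := neg_abs_le _
        have hM1 : |Lin + rin| ≤ M := le_max_left _ _
        linarith [hb.1]
      · have : Uin + rin ≤ |Uin + rin| := le_abs_self _
        have hM2 : |Uin + rin| ≤ M := le_max_right _ _
        linarith [hb.2]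
  have hsumg : Summable (fun k : ℕ => γ ^ k * (rin + Lin)) :=
    (summable_geometric_of_lt_one hg0 hg1).mul_right _
  have hle : (∑' k : ℕ, γ ^ k * (rin + Lin)) ≤ ∑' k, f k := by
    apply Summable.tsum_le_tsum _ hsumg hsum
    intro k
    rw [hf]
    apply mul_le_mul_of_nonneg_left _ (pow_nonneg hg0 k)
    have := (hbound k).1
    linarith
  have hgsum : (∑' k : ℕ, γ ^ k * (rin + Lin)) = (rin + Lin) / (1 - γ) := by
    rw [tsum_mul_right, tsum_geometric_of_lt_one hg0 hg1]
    field_simp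
  constructor
  · rw [← hgsum]; exact hle
  · rw [gt_iff_lt, lt_div_iff₀ h1γ]; linarith
end

section
/- Let k_z ∈ ℕ with k_z ≥ 1. If the state-space sequence ξ satisfies ξ k ∉ G for all k < k_z and ξ k ∈ G for all k ≥ k_z, then for every policy π, J^π(ξ) ≥ L_out·(1-γ^{k_z-1})/(1-γ) + (L_in + r_in)·γ^{k_z-1}/(1-γ). -/
theorem stmt11 {X U : Type*} [Nonempty U]
    (G : Set X) (γ : ℝ) (hg0 : 0 ≤ γ) (hg1 : γ < 1)
    (rb : X → X → U → ℝ) (Lout Uout Lin Uin : ℝ)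
    (hUout : ∀ (x' x : X) (u : U), x' ∉ G → rb x' x u ≤ Uout)
    (hLout : ∀ (x' x : X) (u : U), x' ∉ G → Lout ≤ rb x' x u)
    (hUin : ∀ (x' x : X) (u : U), x' ∈ G → rb x' x u ≤ Uin)
    (hLin : ∀ (x' x : X) (u : U), x' ∈ G → Lin ≤ rb x' x u)
    (rin rexit : ℝ) (rc : X → X → ℝ)
    (hrc_in : ∀ (x' x : X), x' ∈ G → rc x' x = rin)
    (hrc_exit : ∀ (x' x : X), x' ∉ G → x ∈ G → rc x' x = rexit)
    (hrc_zero : ∀ (x' x : X), x' ∉ G → x ∉ G → rc x' x = 0)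
    (r : X → X → U → ℝ)
    (hr : ∀ (x' x : X) (u : U), r x' x u = rb x' x u + rc x' x)
    (kz : ℕ) (hkz : 1 ≤ kz)
    (π : X → U) (ξ : ℕ → X)
    (hbefore : ∀ k < kz, ξ k ∉ G)
    (hafter : ∀ k, kz ≤ k → ξ k ∈ G) :
    (∑' k : ℕ, γ ^ k * r (ξ (k + 1)) (ξ k) (π (ξ k))) ≥ Lout * (1 - γ ^ (kz - 1)) / (1 - γ)
      + (Lin + rin) * γ ^ (kz - 1) / (1 - γ) := by
  have h1γ : 0 < 1 - γ := by linarith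
  set m := kz - 1 with hm
  have hmkz : m + 1 = kz := Nat.succ_pred_eq_of_pos hkz
  set f : ℕ → ℝ := fun k => γ ^ k * r (ξ (k + 1)) (ξ k) (π (ξ k)) with hfdef
  set g : ℕ → ℝ := fun k => γ ^ k * (if k < m then Lout else Lin + rin) with hgdef
  set M : ℝ := |Lout| + |Uout| + |Lin| + |Uin| + |rin| + |rexit| with hMdef
  have hle : ∀ k, g k ≤ f k := by
    intro k
    apply mul_le_mul_of_nonneg_left _ (pow_nonneg hg0 k)
    by_cases hk : k < m
    · simp only [if_pos hk]
      have h1 : ξ (k + 1) ∉ G := hbefore _ (by omega)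
      have h2 : ξ k ∉ G := hbefore _ (by omega)
      rw [hr, hrc_zero _ _ h1 h2]
      have := hLout (ξ (k + 1)) (ξ k) (π (ξ k)) h1
      linarith
    · simp only [if_neg hk]
      have h1 : ξ (k + 1) ∈ G := hafter _ (by omega)
      rw [hr, hrc_in _ _ h1]
      have := hLin (ξ (k + 1)) (ξ k) (π (ξ k)) h1
      linarith
  have hsumM : Summable (fun k : ℕ => M * γ ^ k) :=
    (summable_geometric_of_lt_one hg0 hg1).mul_left M
  have hrb_bound : ∀ k : ℕ, |rb (ξ (k + 1)) (ξ k) (π (ξ k))| ≤ |Lout| + |Uout| + |Lin| + |Uin| := by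
    intro k
    rw [abs_le]
    by_cases h1 : ξ (k + 1) ∈ G
    · have := hLin (ξ (k + 1)) (ξ k) (π (ξ k)) h1
      have := hUin (ξ (k + 1)) (ξ k) (π (ξ k)) h1
      constructor <;>
        linarith [abs_nonneg Lout, abs_nonneg Uout, abs_nonneg Lin, abs_nonneg Uin,
          neg_abs_le Lin, le_abs_self Uin]
    · have := hLout (ξ (k + 1)) (ξ k) (π (ξ k)) h1
      have := hUout (ξ (k + 1)) (ξ k) (π (ξ k)) h1
      constructor <;>
        linarith [abs_nonneg Lout, abs_nonneg Uout, abs_nonneg Lin, abs_nonneg Uin,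
          neg_abs_le Lout, le_abs_self Uout]
  have hrc_bound : ∀ k : ℕ, |rc (ξ (k + 1)) (ξ k)| ≤ |rin| + |rexit| := by
    intro k
    by_cases h1 : ξ (k + 1) ∈ G
    · rw [hrc_in _ _ h1]; linarith [abs_nonneg rexit]
    · by_cases h2 : ξ k ∈ G
      · rw [hrc_exit _ _ h1 h2]; linarith [abs_nonneg rin]
      · rw [hrc_zero _ _ h1 h2]; simp only [abs_zero]; positivity
  have hfbound : ∀ k : ℕ, ‖f k‖ ≤ M * γ ^ k := by
    intro k
    rw [Real.norm_eq_abs, abs_mul, abs_of_nonneg (pow_nonneg hg0 k), mul_comm]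
    apply mul_le_mul_of_nonneg_right _ (pow_nonneg hg0 k)
    rw [hr]
    calc |rb (ξ (k + 1)) (ξ k) (π (ξ k)) + rc (ξ (k + 1)) (ξ k)|
        ≤ |rb (ξ (k + 1)) (ξ k) (π (ξ k))| + |rc (ξ (k + 1)) (ξ k)| := abs_add_le _ _
      _ ≤ M := by have := hrb_bound k; have := hrc_bound k; rw [hMdef]; linarith
  have hfsum : Summable f := Summable.of_norm_bounded hsumM hfbound
  have hgbound : ∀ k : ℕ, ‖g k‖ ≤ (|Lout| + |Lin| + |rin|) * γ ^ k := by
    intro k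
    rw [Real.norm_eq_abs, abs_mul, abs_of_nonneg (pow_nonneg hg0 k), mul_comm]
    apply mul_le_mul_of_nonneg_right _ (pow_nonneg hg0 k)
    by_cases hk : k < m
    · rw [if_pos hk]; nlinarith [abs_nonneg Lin, abs_nonneg rin]
    · rw [if_neg hk]
      calc |Lin + rin| ≤ |Lin| + |rin| := abs_add_le _ _
        _ ≤ _ := by nlinarith [abs_nonneg Lout]
  have hgsum : Summable g :=
    Summable.of_norm_bounded ((summable_geometric_of_lt_one hg0 hg1).mul_left _) hgbound
  have hmain : (∑' k, g k) ≤ ∑' k, f k := hgsum.tsum_le_tsum hle hfsum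
  have hsplit := hgsum.sum_add_tsum_nat_add m
  have hfin : (∑ i ∈ Finset.range m, g i) = Lout * (1 - γ ^ m) / (1 - γ) := by
    have : ∀ i ∈ Finset.range m, g i = Lout * γ ^ i := by
      intro i hi
      simp only [hgdef, if_pos (Finset.mem_range.mp hi)]
      ring
    rw [Finset.sum_congr rfl this, ← Finset.mul_sum, geom_sum_eq hg1.ne, mul_div_assoc]
    congr 1
    rw [div_eq_div_iff (sub_ne_zero.mpr hg1.ne) (sub_ne_zero.mpr hg1.ne')]
    ring
  have htail : (∑' i : ℕ, g (i + m)) = (Lin + rin) * γ ^ m / (1 - γ) := by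
    have : ∀ i : ℕ, g (i + m) = (Lin + rin) * γ ^ m * γ ^ i := by
      intro i
      simp only [hgdef, if_neg (by omega : ¬ i + m < m)]
      rw [pow_add]
      ring
    rw [tsum_congr this, tsum_mul_left, tsum_geometric_of_lt_one hg0 hg1]
    field_simp
  rw [ge_iff_le]
  calc Lout * (1 - γ ^ m) / (1 - γ) + (Lin + rin) * γ ^ m / (1 - γ)
      = ∑' k, g k := by rw [← hsplit, hfin, htail]
    _ ≤ ∑' k, f k := hmain
end

section
/- Let γ ∈ ℝ with 0 < γ < 1, let k_s, k_p ∈ ℕ with k_s ≥ 1 and k_p ≥ 1, and let U_out, U_in, L_in, σ be real numbers with U_in ≥ L_in. If σ > U_out/(1-γ) + (U_in - L_in)·γ^{k_s}/((1-γ)·(1-γ^{k_s})), then σ ≥ U_out/(1-γ) and there exist real numbers r_in and r_exit such that: r_in ≥ U_out - L_in; r_in > σ·(1-γ) - L_in; r_in ≤ -U_in - U_out·(1-γ^{k_s})/γ^{k_s} + σ·(1-γ)/γ^{k_s}; and r_exit ≤ -U_out - (1/γ^{k_p-1})·[(U_in + r_in)·(1 + γ^{k_p-1}(γ-1))/(1-γ)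 - σ]. -/
theorem stmt13 (γ : ℝ) (hg0 : 0 < γ) (hg1 : γ < 1)
    (ks kp : ℕ) (hks : 1 ≤ ks) (hkp : 1 ≤ kp)
    (Uout Uin Lin σ : ℝ) (hUL : Uin ≥ Lin)
    (hσ : σ > Uout / (1 - γ) + (Uin - Lin) * γ ^ ks / ((1 - γ) * (1 - γ ^ ks))) :
    σ ≥ Uout / (1 - γ) ∧
    ∃ rin rexit : ℝ,
      rin ≥ Uout - Lin ∧
      rin > σ * (1 - γ) - Lin ∧
      rin ≤ -Uin - Uout * (1 - γ ^ ks) / γ ^ ks + σ * (1 - γ) / γ ^ ks ∧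
      rexit ≤ -Uout - (1 / γ ^ (kp - 1)) *
        ((Uin + rin) * (1 + γ ^ (kp - 1) * (γ - 1)) / (1 - γ) - σ) := by
  have hgk : 0 < γ ^ ks := pow_pos hg0 ks
  have hgk1 : γ ^ ks < 1 := pow_lt_one₀ hg0.le hg1 (by omega)
  have h1g : 0 < 1 - γ := by linarith
  have h1gk : 0 < 1 - γ ^ ks := by linarith
  have h0 := hσ
  rw [gt_iff_lt, div_add_div _ _ h1g.ne' (mul_pos h1g h1gk).ne',
    div_lt_iff₀ (by positivity : (0:ℝ) < (1 - γ) * ((1 - γ) * (1 - γ ^ ks)))] at h0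
  have h : Uout * (1 - γ ^ ks) + (Uin - Lin) * γ ^ ks < σ * ((1 - γ) * (1 - γ ^ ks)) := by
    have := lt_of_mul_lt_mul_left (a := 1 - γ)
      (b := Uout * (1 - γ ^ ks) + (Uin - Lin) * γ ^ ks)
      (c := σ * ((1 - γ) * (1 - γ ^ ks))) (by nlinarith [h0]) h1g.le
    exact this
  constructor
  · rw [ge_iff_le, div_le_iff₀ h1g]
    nlinarith [mul_nonneg (sub_nonneg.2 hUL) hgk.le, mul_pos hgk h1g]
  · refine ⟨-Uin - Uout * (1 - γ ^ ks) / γ ^ ks + σ * (1 - γ) / γ ^ ks,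
      -Uout - (1 / γ ^ (kp - 1)) *
        ((Uin + (-Uin - Uout * (1 - γ ^ ks) / γ ^ ks + σ * (1 - γ) / γ ^ ks)) *
          (1 + γ ^ (kp - 1) * (γ - 1)) / (1 - γ) - σ), ?_, ?_, le_refl _, le_refl _⟩
    · rw [ge_iff_le, ← sub_nonneg]
      have key : 0 ≤ (-Uin - Uout * (1 - γ ^ ks) / γ ^ ks + σ * (1 - γ) / γ ^ ks
          - (Uout - Lin)) * γ ^ ks := by
        field_simp
        nlinarith [mul_nonneg (sub_nonneg.2 hUL) hgk.le]
      nlinarith [key]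
    · rw [gt_iff_lt, ← sub_pos]
      have key : 0 < (-Uin - Uout * (1 - γ ^ ks) / γ ^ ks + σ * (1 - γ) / γ ^ ks
          - (σ * (1 - γ) - Lin)) * γ ^ ks := by
        field_simp
        nlinarith
      nlinarith [key]
end

section
/- Let γ ∈ ℝ with 0 < γ < 1, let k_s, k_p, k_z ∈ ℕ with 1 ≤ k_z ≤ k_s and k_p ≥ 1, and let U_out, L_out, U_in, L_in, σ be real numbers with U_in ≥ L_in and U_out ≥ L_out. Write Δ_in = U_in - L_in and Δ_out = U_out - L_out. If σ > Δ_in·γ^{k_s}/((1-γ)·(1-γ^{k_s})) + U_out/(1-γ) + (γ^{k_s}·(1-γ^{k_z-1})/((1-γ)·(γ^{k_z-1} - γ^{k_s})))·(γ^{k_s}·Δ_in/(1-γ^{k_s}) + Δ_out), then there exist real numbers r_in and r_exit such that: r_in ≥ U_out - L_in; r_in > σ·(1-γ) - L_in; r_in > -L_in - L_out·(1-γ^{k_z-1})/γ^{k_z-1} + σ·(1-γ)/γ^{k_z-1}; r_in ≤ -U_in - U_out·(1-γ^{k_s})/γ^{k_s} + σ·(1-γ)/γ^{k_s}; σ ≥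 U_out/(1-γ); and r_exit ≤ -U_out - (1/γ^{k_p-1})·[(U_in + r_in)·(1 + γ^{k_p-1}(γ-1))/(1-γ) - σ]. -/
set_option maxHeartbeats 800000


theorem stmt14 (γ : ℝ) (hg0 : 0 < γ) (hg1 : γ < 1)
    (ks kp kz : ℕ) (hkz1 : 1 ≤ kz) (hkzs : kz ≤ ks) (hkp : 1 ≤ kp)
    (Uout Lout Uin Lin σ : ℝ) (hULin : Uin ≥ Lin) (hULout : Uout ≥ Lout)
    (hσ : σ > (Uin - Lin) * γ ^ ks / ((1 - γ) * (1 - γ ^ ks)) + Uout / (1 - γ)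
      + (γ ^ ks * (1 - γ ^ (kz - 1)) / ((1 - γ) * (γ ^ (kz - 1) - γ ^ ks))) *
        (γ ^ ks * (Uin - Lin) / (1 - γ ^ ks) + (Uout - Lout))) :
    ∃ rin rexit : ℝ,
      rin ≥ Uout - Lin ∧
      rin > σ * (1 - γ) - Lin ∧
      rin > -Lin - Lout * (1 - γ ^ (kz - 1)) / γ ^ (kz - 1)
        + σ * (1 - γ) / γ ^ (kz - 1) ∧
      rin ≤ -Uin - Uout * (1 - γ ^ ks) / γ ^ ks + σ * (1 - γ) / γ ^ ks ∧
      σ ≥ Uout / (1 - γ) ∧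
      rexit ≤ -Uout - (1 / γ ^ (kp - 1)) *
        ((Uin + rin) * (1 + γ ^ (kp - 1) * (γ - 1)) / (1 - γ) - σ) := by
  set A := γ ^ ks with hAdef
  set B := γ ^ (kz - 1) with hBdef
  have hA : 0 < A := pow_pos hg0 _
  have hB : 0 < B := pow_pos hg0 _
  have hA1 : A < 1 := pow_lt_one₀ hg0.le hg1 (by omega)
  have hB1 : B ≤ 1 := pow_le_one₀ hg0.le hg1.le
  have hBA : A < B := by
    have : kz - 1 < ks := by omega
    exact pow_lt_pow_right_of_lt_one₀ hg0 hg1 this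
  have hγ1 : 0 < 1 - γ := by linarith
  have hΔin : 0 ≤ Uin - Lin := by linarith
  have hΔout : 0 ≤ Uout - Lout := by linarith
  have hP : 0 < (1 - γ) * (1 - A) * (B - A) :=
    mul_pos (mul_pos hγ1 (by linarith)) (by linarith)
  have hK0 := mul_lt_mul_of_pos_right hσ hP
  have hEq : ((Uin - Lin) * A / ((1 - γ) * (1 - A)) + Uout / (1 - γ)
      + (A * (1 - B) / ((1 - γ) * (B - A))) *
        (A * (Uin - Lin) / (1 - A) + (Uout - Lout))) * ((1 - γ) * (1 - A) * (B - A))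
      = (1 - A) * (A * B * (Uin - Lin) + B * (1 - A) * Uout - A * (1 - B) * Lout) := by
    have h1 : (1 - γ) ≠ 0 := ne_of_gt hγ1
    have h2 : (1 - A) ≠ 0 := by intro h; linarith [h]
    have h3 : (B - A) ≠ 0 := by intro h; nlinarith [h]
    field_simp
    ring
  rw [hEq] at hK0
  -- hK0 : (1-A) * (A*B*Δin + B*(1-A)*Uout - A*(1-B)*Lout) < σ * ((1-γ)*(1-A)*(B-A))
  have hK3 : A * B * (Uin - Lin) + B * (1 - A) * Uout - A * (1 - B) * Lout
      < σ * (1 - γ) * (B - A) := by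
    have hr : σ * ((1 - γ) * (1 - A) * (B - A)) = (1 - A) * (σ * (1 - γ) * (B - A)) := by ring
    rw [hr] at hK0
    exact lt_of_mul_lt_mul_left hK0 (by linarith)
  have hN : 0 ≤ A * (1 - B) * (A * (Uin - Lin) + (Uout - Lout) * (1 - A)) := by
    exact mul_nonneg (mul_nonneg hA.le (by linarith))
      (add_nonneg (mul_nonneg hA.le hΔin) (mul_nonneg hΔout (by linarith)))
  have hK2 : A * (Uin - Lin) + Uout * (1 - A) < σ * (1 - γ) * (1 - A) := by
    have h2 : (A * (Uin - Lin) + Uout * (1 - A)) * (B - A)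
        < (σ * (1 - γ) * (1 - A)) * (B - A) := by linarith [hK0, hN]
    exact lt_of_mul_lt_mul_right h2 (by linarith)
  have hUσ : Uout < σ * (1 - γ) := by
    nlinarith [hK2, mul_nonneg hA.le hΔin, hA, hA1]
  have hd : 0 < A * (σ * (1 - γ) - Uout) := mul_pos hA (by linarith)
  have hnum1 : 0 < σ * (1 - γ) - A * (Uin - Lin) - Uout := by nlinarith [hK2, hd]
  refine ⟨-Uin - Uout * (1 - A) / A + σ * (1 - γ) / A, _, ?_, ?_, ?_, le_refl _, ?_, le_refl _⟩
  · rw [ge_iff_le, ← sub_nonneg]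
    have h : -Uin - Uout * (1 - A) / A + σ * (1 - γ) / A - (Uout - Lin)
        = (σ * (1 - γ) - A * (Uin - Lin) - Uout) / A := by
      field_simp
      ring
    rw [h]
    exact le_of_lt (div_pos hnum1 hA)
  · rw [gt_iff_lt, ← sub_pos]
    have h : -Uin - Uout * (1 - A) / A + σ * (1 - γ) / A - (σ * (1 - γ) - Lin)
        = (σ * (1 - γ) * (1 - A) - (A * (Uin - Lin) + Uout * (1 - A))) / A := by
      field_simp
      ring
    rw [h]
    exact div_pos (by linarith) hA
  · rw [gt_iff_lt, ← sub_pos]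
    have h : -Uin - Uout * (1 - A) / A + σ * (1 - γ) / A -
        (-Lin - Lout * (1 - B) / B + σ * (1 - γ) / B)
        = (σ * (1 - γ) * (B - A)
          - (A * B * (Uin - Lin) + B * (1 - A) * Uout - A * (1 - B) * Lout)) / (A * B) := by
      field_simp
      ring
    rw [h]
    exact div_pos (by linarith) (mul_pos hA hB)
  · rw [ge_iff_le, div_le_iff₀ hγ1]
    linarith [hUσ]
end
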